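/- Let N ≥ 2, let A be a Hermitian N×N complex matrix with spectral decomposition A = ∑_i a_i u_i u_i* for an orthonormal basis {u_i} of ℂ^N and real eigenvalues a_i, τ = tr A, let v ∈ ℂ^N be a unit vector with α = ⟨v, A v⟩, let {w_j} be an orthonormal basis of ℂ^N with w_r = v̄ for a fixed index r, assume α ≠ 0, τ ≠ 0, Nα ≠ τ, and assume ((1 − a_i/α)/(N/τ − 1/α))·(1/τ − δ_{jr}/α) ≥ 0 for all i, j. Define C_ij† = √(((1 − a_i/α)/(N/τ − 1/α))·(1/τ − δ_{jr}/α))·u_i w_j*. Then ∑_{i,j} C_ij† C_ij = 𝟙 − A/α. -/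

import Mathlib

open Matrix

lemma completeness (N : ℕ) (u : Fin N → Fin N → ℂ)
    (hu : ∀ i j, star (u i) ⬝ᵥ u j = if i = j then 1 else 0) :
    ∑ i, vecMulVec (u i) (star (u i)) = (1 : Matrix (Fin N) (Fin N) ℂ) := by
  set U : Matrix (Fin N) (Fin N) ℂ := fun k i => u i k with hU
  have h1 : Uᴴ * U = 1 := by
    ext i j
    have := hu i j
    rw [Matrix.mul_apply, Matrix.one_apply]
    simp only [conjTranspose_apply]
    simpa [Matrix.mul_apply, conjTranspose_apply, dotProduct, Matrix.one_apply, hU] using this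
  have h2 : U * Uᴴ = 1 := mul_eq_one_comm.mp h1
  ext k l
  rw [← h2, Matrix.mul_apply]
  simp only [conjTranspose_apply]
  simp [Matrix.mul_apply, conjTranspose_apply, vecMulVec_apply, Matrix.sum_apply, hU]

theorem kraus_C_sum (N : ℕ) (hN : 2 ≤ N)
    (a : Fin N → ℝ) (u : Fin N → Fin N → ℂ)
    (hu : ∀ i j, star (u i) ⬝ᵥ u j = if i = j then 1 else 0)
    (A : Matrix (Fin N) (Fin N) ℂ) (hA : A.IsHermitian)
    (hAdef : A = ∑ i, ((a i : ℝ) : ℂ) • vecMulVec (u i) (star (u i)))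
    (v : Fin N → ℂ) (hv : star v ⬝ᵥ v = 1)
    (τ α : ℝ) (hτ : A.trace = (τ : ℂ)) (hα : star v ⬝ᵥ A.mulVec v = (α : ℂ))
    (w : Fin N → Fin N → ℂ)
    (hw : ∀ i j, star (w i) ⬝ᵥ w j = if i = j then 1 else 0)
    (r : Fin N) (hwr : w r = star v)
    (hα0 : α ≠ 0) (hτ0 : τ ≠ 0) (hNα : (N : ℝ) * α ≠ τ)
    (hrad : ∀ i j : Fin N,
      0 ≤ ((1 - a i / α) / ((N : ℝ) / τ - 1 / α)) *
        (1 / τ - (if j = r then 1 else 0) / α)) :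
    (∑ i, ∑ j,
        (Real.sqrt (((1 - a i / α) / ((N : ℝ) / τ - 1 / α)) *
            (1 / τ - (if j = r then 1 else 0) / α)) • vecMulVec (u i) (star (w j))) *
          (Real.sqrt (((1 - a i / α) / ((N : ℝ) / τ - 1 / α)) *
            (1 / τ - (if j = r then 1 else 0) / α)) • vecMulVec (u i) (star (w j)))ᴴ) =
      1 - ((α : ℂ))⁻¹ • A := by
  set D : ℝ := (N : ℝ) / τ - 1 / α with hD
  have hD0 : D ≠ 0 := by
    rw [hD]
    rw [div_sub_div _ _ hτ0 hα0]
    refine div_ne_zero ?_ (mul_ne_zero hτ0 hα0)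
    intro h
    apply hNα
    linarith [sub_eq_zero.mp h]
  set rad : Fin N → Fin N → ℝ :=
    fun i j => ((1 - a i / α) / D) * (1 / τ - (if j = r then 1 else 0) / α) with hradDef
  have hMM : ∀ i j, (vecMulVec (u i) (star (w j))) * (vecMulVec (u i) (star (w j)))ᴴ
      = vecMulVec (u i) (star (u i)) := by
    intro i j
    ext k l
    have key : ∀ m, (vecMulVec (u i) (star (w j))) k m
        * ((vecMulVec (u i) (star (w j)))ᴴ) m l
        = (u i k * star (u i l)) * (star (w j) m * w j m) := by
      intro m
      simp only [vecMulVec_apply, conjTranspose_apply, star_mul', star_star, Pi.star_apply]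
      ring
    rw [Matrix.mul_apply]
    simp_rw [key]
    rw [← Finset.mul_sum]
    have h1 : ∑ m, star (w j m) * w j m = 1 := by
      simpa [dotProduct] using hw j j
    simp only [Pi.star_apply]
    rw [h1, mul_one]
    simp [vecMulVec_apply]
  have hterm : ∀ i j,
      (Real.sqrt (rad i j) • vecMulVec (u i) (star (w j))) *
        (Real.sqrt (rad i j) • vecMulVec (u i) (star (w j)))ᴴ
      = rad i j • vecMulVec (u i) (star (u i)) := by
    intro i j
    rw [conjTranspose_smul, smul_mul_smul_comm, hMM]
    simp only [star_trivial]
    rw [Real.mul_self_sqrt (hrad i j)]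
  have hrowsum : ∀ i, ∑ j, rad i j = 1 - a i / α := by
    intro i
    have : ∑ j, rad i j = ((1 - a i / α) / D) * ∑ j, (1 / τ - (if j = r then 1 else 0) / α) := by
      rw [Finset.mul_sum]
    rw [this]
    have hsum : ∑ j : Fin N, (1 / τ - (if j = r then 1 else 0) / α) = D := by
      rw [Finset.sum_sub_distrib]
      simp [ite_mul, Finset.sum_ite_eq', hD, div_eq_mul_inv]
    rw [hsum, div_mul_cancel₀ _ hD0]
  calc (∑ i, ∑ j,
        (Real.sqrt (rad i j) • vecMulVec (u i) (star (w j))) *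
          (Real.sqrt (rad i j) • vecMulVec (u i) (star (w j)))ᴴ)
      = ∑ i, (1 - a i / α) • vecMulVec (u i) (star (u i)) := by
        refine Finset.sum_congr rfl fun i _ => ?_
        simp_rw [hterm]
        rw [← Finset.sum_smul, hrowsum]
    _ = ∑ i, (vecMulVec (u i) (star (u i))
          - ((α : ℂ))⁻¹ • (((a i : ℝ) : ℂ) • vecMulVec (u i) (star (u i)))) := by
        refine Finset.sum_congr rfl fun i _ => ?_
        ext k l
        simp only [Matrix.smul_apply, Matrix.sub_apply, vecMulVec_apply, Complex.real_smul,
          smul_eq_mul]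
        push_cast
        field_simp
    _ = 1 - ((α : ℂ))⁻¹ • A := by
        rw [Finset.sum_sub_distrib, ← Finset.smul_sum, completeness N u hu, ← hAdef]
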